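/- For positive integers s, k and n, the Cohen-Ramanujan expansion J_k(n)/n^k = Σ_{q=1}^∞ [μ(q) / (ζ(s+k) J_{s+k}(q))] · c_q^s(n^s) holds, the series converging absolutely. -/

import Mathlib

open Finset

/-- Generalized s-GCD `(a,b)_s`: the largest `l^s` dividing both `a` and `b`. -/
def sgcd (s a b : ℕ) : ℕ :=
  (Nat.findGreatest (fun l => l ^ s ∣ a ∧ l ^ s ∣ b) (Nat.gcd a b)) ^ s

/-- Klee's function `Φ_s(n)`. -/
def klee (s n : ℕ) : ℕ := ((Finset.Icc 1 n).filter (fun m => sgcd s m n = 1)).card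

/-- Cohen–Ramanujan sum (exponential form). -/
noncomputable def CRsum (s r n : ℕ) : ℂ :=
  ∑ a ∈ (Finset.Icc 1 (r ^ s)).filter (fun a => sgcd s a (r ^ s) = 1),
    Complex.exp (2 * Real.pi * Complex.I * n * a / (r ^ s))

/-- Cohen–Ramanujan sum (divisor form). -/
def CRsumD (s r n : ℕ) : ℤ :=
  ∑ d ∈ r.divisors.filter (fun d => d ^ s ∣ n),
    ArithmeticFunction.moebius (r / d) * (d : ℤ) ^ s

/-- `τ_s(m)`: number of s-th powers dividing `m`. -/
def taus (s m : ℕ) : ℕ := ((Finset.Icc 1 m).filter (fun l => l ^ s ∣ m)).card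

/-- Jordan totient via tuples. -/
def jordanT (s r : ℕ) : ℕ :=
  (Finset.univ.filter (fun v : Fin s → Fin r =>
    Nat.gcd (Finset.univ.gcd (fun i => (v i : ℕ))) r = 1)).card

/-- Riemann zeta as a real series (for real arguments > 1). -/
noncomputable def zetaR (t : ℝ) : ℝ := ∑' n : ℕ, 1 / ((n : ℝ) + 1) ^ t

/-- Jordan totient with real exponent: `J_t(n) = n^t ∏_{p ∣ n} (1 - p^{-t})`. -/
noncomputable def jordanR (t : ℝ) (n : ℕ) : ℝ :=
  (n : ℝ) ^ t * ∏ p ∈ n.primeFactors, (1 - (p : ℝ) ^ (-t))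

/-- Sum-of-divisors function with a real exponent. -/
noncomputable def sigmaR (t : ℝ) (n : ℕ) : ℝ := ∑ d ∈ n.divisors, (d : ℝ) ^ t

/-- `k` is s-power-free: no s-th power greater than 1 divides `k`. -/
def SPowFree (s k : ℕ) : Prop := ∀ l : ℕ, 1 < l → ¬ l ^ s ∣ k


def crG (s m : ℕ) : ArithmeticFunction ℤ :=
  ⟨fun d => if d ≠ 0 ∧ d ^ s ∣ m then (d : ℤ) ^ s else 0, by simp⟩

lemma crG_apply (s m d : ℕ) :
    crG s m d = if d ≠ 0 ∧ d ^ s ∣ m then (d : ℤ) ^ s else 0 := rfl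

lemma crG_mult (s m : ℕ) : (crG s m).IsMultiplicative := by
  constructor
  · simp [crG_apply]
  · intro a b hab
    simp only [crG_apply]
    rcases eq_or_ne a 0 with rfl | ha
    · simp
    rcases eq_or_ne b 0 with rfl | hb
    · simp
    by_cases h1 : a ^ s ∣ m <;> by_cases h2 : b ^ s ∣ m
    · have hm : (a * b) ^ s ∣ m := by
        rw [mul_pow]; exact (Nat.Coprime.pow _ _ hab).mul_dvd_of_dvd_of_dvd h1 h2
      simp only [ha, hb, h1, h2, hm, mul_ne_zero ha hb, ne_eq, not_false_eq_true,
        and_self, if_true]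
      push_cast; ring
    · have hm : ¬ (a * b) ^ s ∣ m := fun h =>
        h2 ((pow_dvd_pow_of_dvd (dvd_mul_left b a) s).trans h)
      simp [ha, hb, h1, h2, hm]
    · have hm : ¬ (a * b) ^ s ∣ m := fun h =>
        h1 ((pow_dvd_pow_of_dvd (dvd_mul_right a b) s).trans h)
      simp [ha, hb, h1, h2, hm]
    · have hm : ¬ (a * b) ^ s ∣ m := fun h =>
        h1 ((pow_dvd_pow_of_dvd (dvd_mul_right a b) s).trans h)
      simp [ha, hb, h1, h2, hm]

lemma CRsumD_eq_mul (s m : ℕ) (r : ℕ) :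
    CRsumD s r m = (ArithmeticFunction.moebius * crG s m) r := by
  rw [ArithmeticFunction.mul_apply, Nat.sum_divisorsAntidiagonal'
    (f := fun x y => (ArithmeticFunction.moebius x) * crG s m y)]
  rw [CRsumD, Finset.sum_filter]
  refine Finset.sum_congr rfl fun d hd => ?_
  have hd0 : d ≠ 0 := (Nat.pos_of_mem_divisors hd).ne'
  rw [crG_apply]
  by_cases h : d ^ s ∣ m <;> simp [h, hd0]

lemma CRsumD_mult (s m : ℕ) {a b : ℕ} (hab : Nat.Coprime a b) :
    CRsumD s (a * b) m = CRsumD s a m * CRsumD s b m := by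
  rw [CRsumD_eq_mul, CRsumD_eq_mul, CRsumD_eq_mul]
  exact (ArithmeticFunction.isMultiplicative_moebius.mul (crG_mult s m)).map_mul_of_coprime hab

lemma CRsumD_one (s m : ℕ) : CRsumD s 1 m = 1 := by
  rw [CRsumD_eq_mul]
  exact (ArithmeticFunction.isMultiplicative_moebius.mul (crG_mult s m)).map_one

lemma CRsumD_prime (s m : ℕ) {p : ℕ} (hp : p.Prime) :
    CRsumD s p m = (if p ^ s ∣ m then (p : ℤ) ^ s else 0) - 1 := by
  rw [CRsumD, Nat.Prime.divisors hp]
  have h1p : (1 : ℕ) ≠ p := hp.one_lt.ne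
  by_cases h : p ^ s ∣ m
  · rw [Finset.filter_insert, if_pos (by simp), Finset.filter_singleton, if_pos h,
      Finset.sum_insert (by simp [h1p]), Finset.sum_singleton, if_pos h]
    rw [Nat.div_one, Nat.div_self hp.pos]
    simp [ArithmeticFunction.moebius_apply_prime hp]
    ring
  · rw [Finset.filter_insert, if_pos (by simp), Finset.filter_singleton, if_neg h, if_neg h]
    simp [Nat.div_one, ArithmeticFunction.moebius_apply_prime hp]


lemma one_sub_rpow_pos {t : ℝ} (ht : 0 < t) {p : ℕ} (hp : 2 ≤ p) :
    0 < 1 - (p : ℝ) ^ (-t) := by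
  have h1 : (1 : ℝ) < p := by exact_mod_cast hp.trans_lt' one_lt_two
  have := Real.rpow_lt_one_of_one_lt_of_neg h1 (neg_neg_iff_pos.mpr ht)
  linarith

lemma jordanR_pos {t : ℝ} (ht : 0 < t) {q : ℕ} (hq : 0 < q) : 0 < jordanR t q := by
  unfold jordanR
  apply mul_pos
  · exact Real.rpow_pos_of_pos (by exact_mod_cast hq) t
  · exact Finset.prod_pos fun p hp =>
      one_sub_rpow_pos ht (Nat.prime_of_mem_primeFactors hp).two_le

lemma jordanR_zero {t : ℝ} (ht : t ≠ 0) : jordanR t 0 = 0 := by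
  simp [jordanR, Real.zero_rpow ht]

lemma jordanR_one (t : ℝ) : jordanR t 1 = 1 := by simp [jordanR]

lemma jordanR_mult {t : ℝ} (ht : t ≠ 0) {a b : ℕ} (hab : Nat.Coprime a b) :
    jordanR t (a * b) = jordanR t a * jordanR t b := by
  rcases eq_or_ne a 0 with rfl | ha
  · simp [jordanR_zero ht]
  rcases eq_or_ne b 0 with rfl | hb
  · simp [jordanR_zero ht]
  unfold jordanR
  rw [Nat.cast_mul, Real.mul_rpow (by positivity) (by positivity),
    Nat.Coprime.primeFactors_mul hab, Finset.prod_union (Nat.Coprime.disjoint_primeFactors hab)]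
  ring

lemma jordanR_prime {t : ℝ} {p : ℕ} (hp : p.Prime) :
    jordanR t p = (p : ℝ) ^ t * (1 - (p : ℝ) ^ (-t)) := by
  rw [jordanR, Nat.Prime.primeFactors hp, Finset.prod_singleton]

/-- telescoping product -/
lemma prod_Icc_one_sub_sq (q : ℕ) (hq : 1 ≤ q) :
    ∏ j ∈ Finset.Icc 2 q, (1 - 1 / (j : ℝ) ^ 2) = ((q : ℝ) + 1) / (2 * q) := by
  induction q with
  | zero => omega
  | succ m ih =>
    rcases Nat.lt_or_ge m 1 with hm | hm
    · interval_cases m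
      · norm_num
    · have h2 : 2 ≤ m + 1 := by omega
      rw [Finset.prod_Icc_succ_top (by omega), ih hm]
      have hm0 : (m : ℝ) ≠ 0 := by positivity
      have hm1 : (m : ℝ) + 1 ≠ 0 := by positivity
      field_simp
      push_cast; ring

lemma prod_primeFactors_lower {t : ℝ} (ht : 2 ≤ t) {q : ℕ} (hq : 1 ≤ q) :
    (1 : ℝ) / 2 ≤ ∏ p ∈ q.primeFactors, (1 - (p : ℝ) ^ (-t)) := by
  have ht0 : (0 : ℝ) < t := by linarith
  have step1 : ∏ p ∈ q.primeFactors, (1 - 1 / (p : ℝ) ^ 2)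
      ≤ ∏ p ∈ q.primeFactors, (1 - (p : ℝ) ^ (-t)) := by
    apply Finset.prod_le_prod
    · intro p hp
      have h2 := (Nat.prime_of_mem_primeFactors hp).two_le
      have hp1 : (1 : ℝ) ≤ p := by exact_mod_cast h2.trans_lt' one_lt_two |>.le
      have h1p2 : ((1:ℝ)) ≤ ((p : ℝ)) ^ 2 := one_le_pow₀ hp1
      have hpos : (0:ℝ) < (p:ℝ)^2 := by positivity
      rw [sub_nonneg, div_le_one hpos]
      exact h1p2
    · intro p hp
      have h2 := (Nat.prime_of_mem_primeFactors hp).two_le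
      have hp1 : (1 : ℝ) ≤ p := by exact_mod_cast h2.trans_lt' one_lt_two |>.le
      have hle : (p : ℝ) ^ (-t) ≤ (p : ℝ) ^ (-(2:ℝ)) :=
        Real.rpow_le_rpow_of_exponent_le hp1 (by linarith)
      have : (p : ℝ) ^ (-(2:ℝ)) = 1 / (p : ℝ) ^ 2 := by
        rw [Real.rpow_neg (by positivity), one_div,
          show (2:ℝ) = ((2:ℕ):ℝ) by norm_num, Real.rpow_natCast]
      linarith [hle.trans_eq this]
  have step2 : ∏ j ∈ Finset.Icc 2 q, (1 - 1 / (j : ℝ) ^ 2)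
      ≤ ∏ p ∈ q.primeFactors, (1 - 1 / (p : ℝ) ^ 2) := by
    have hsub : q.primeFactors ⊆ Finset.Icc 2 q := by
      intro p hp
      have hp' := Nat.prime_of_mem_primeFactors hp
      exact Finset.mem_Icc.mpr ⟨hp'.two_le, Nat.le_of_dvd hq (Nat.dvd_of_mem_primeFactors hp)⟩
    rw [← Finset.prod_sdiff hsub]
    have h1 : ∏ j ∈ Finset.Icc 2 q \ q.primeFactors, (1 - 1 / (j : ℝ) ^ 2) ≤ 1 := by
      apply Finset.prod_le_one
      · intro i hi
        have : 2 ≤ i := (Finset.mem_Icc.mp (Finset.mem_sdiff.mp hi).1).1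
        have : (1:ℝ) ≤ (i:ℝ)^2 := one_le_pow₀ (by exact_mod_cast this.trans_lt' one_lt_two |>.le)
        have hpos : (0:ℝ) < (i:ℝ)^2 := by positivity
        rw [sub_nonneg]
        rw [div_le_one hpos]; linarith
      · intro i hi
        have : 2 ≤ i := (Finset.mem_Icc.mp (Finset.mem_sdiff.mp hi).1).1
        have hpos : (0:ℝ) < (i:ℝ)^2 := by positivity
        have : (0:ℝ) < 1/(i:ℝ)^2 := by positivity
        linarith
    have h2 : (0:ℝ) ≤ ∏ p ∈ q.primeFactors, (1 - 1 / (p : ℝ) ^ 2) := by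
      apply Finset.prod_nonneg
      intro i hi
      have h2i := (Nat.prime_of_mem_primeFactors hi).two_le
      have : (1:ℝ) ≤ (i:ℝ)^2 := one_le_pow₀ (by exact_mod_cast h2i.trans_lt' one_lt_two |>.le)
      have hpos : (0:ℝ) < (i:ℝ)^2 := by positivity
      rw [sub_nonneg, div_le_one hpos]; linarith
    calc (∏ j ∈ Finset.Icc 2 q \ q.primeFactors, (1 - 1 / (j:ℝ)^2)) *
          ∏ p ∈ q.primeFactors, (1 - 1/(p:ℝ)^2) ≤ 1 * ∏ p ∈ q.primeFactors, (1 - 1/(p:ℝ)^2) :=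
          mul_le_mul_of_nonneg_right h1 h2
      _ = _ := one_mul _
  have step3 : (1:ℝ)/2 ≤ ∏ j ∈ Finset.Icc 2 q, (1 - 1 / (j : ℝ) ^ 2) := by
    rw [prod_Icc_one_sub_sq q hq]
    rw [div_le_div_iff₀ (by norm_num) (by positivity)]
    have : (1:ℝ) ≤ q := by exact_mod_cast hq
    nlinarith
  linarith

lemma jordanR_lower {t : ℝ} (ht : 2 ≤ t) {q : ℕ} (hq : 1 ≤ q) :
    (1 : ℝ) / 2 * (q : ℝ) ^ t ≤ jordanR t q := by
  unfold jordanR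
  rw [mul_comm ((1:ℝ)/2) _]
  apply mul_le_mul_of_nonneg_left (prod_primeFactors_lower ht hq)
  positivity

lemma abs_moebius_le_one' (q : ℕ) : |(ArithmeticFunction.moebius q : ℝ)| ≤ 1 := by
  have h : |ArithmeticFunction.moebius q| ≤ 1 := by
    rw [ArithmeticFunction.abs_moebius]; split_ifs <;> norm_num
  exact_mod_cast h

theorem jordan_CohenRamanujan_expansion (s k n : ℕ) (hs : 0 < s) (hk : 0 < k)
    (hn : 0 < n) :
    Summable (fun q : ℕ =>
        |(ArithmeticFunction.moebius (q + 1) : ℝ) /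
            (zetaR (s + k) * jordanR (s + k) (q + 1)) * (CRsumD s (q + 1) (n ^ s) : ℝ)|) ∧
      HasSum (fun q : ℕ =>
          (ArithmeticFunction.moebius (q + 1) : ℝ) /
            (zetaR (s + k) * jordanR (s + k) (q + 1)) * (CRsumD s (q + 1) (n ^ s) : ℝ))
        (jordanR k n / (n : ℝ) ^ k) := by
  classical
  set t : ℝ := (s : ℝ) + (k : ℝ) with ht_def
  have ht2 : (2 : ℝ) ≤ t := by
    have h1 : (1:ℝ) ≤ (s:ℝ) := by exact_mod_cast hs
    have h2 : (1:ℝ) ≤ (k:ℝ) := by exact_mod_cast hk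
    simp only [ht_def]; linarith
  have ht0 : (0 : ℝ) < t := by linarith
  have htne : t ≠ 0 := ht0.ne'
  have hns : (n : ℕ) ^ s ≠ 0 := by positivity
  -- The multiplicative function F
  set F : ℕ → ℝ := fun q =>
    (ArithmeticFunction.moebius q : ℝ) * (CRsumD s q (n ^ s) : ℝ) / jordanR t q with hF_def
  have hF0 : F 0 = 0 := by simp [hF_def]
  have hF1 : F 1 = 1 := by simp [hF_def, CRsumD_one, jordanR_one]
  have hFmul : ∀ {a b : ℕ}, Nat.Coprime a b → F (a * b) = F a * F b := by
    intro a b hab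
    rcases eq_or_ne a 0 with rfl | ha
    · have : b = 1 := by simpa using hab
      subst this; simp [hF0, hF1]
    rcases eq_or_ne b 0 with rfl | hb
    · have : a = 1 := by simpa [Nat.coprime_zero_right] using hab
      subst this; simp [hF0, hF1]
    have hJa : jordanR t a ≠ 0 := (jordanR_pos ht0 (Nat.pos_of_ne_zero ha)).ne'
    have hJb : jordanR t b ≠ 0 := (jordanR_pos ht0 (Nat.pos_of_ne_zero hb)).ne'
    simp only [hF_def, CRsumD_mult s (n ^ s) hab, jordanR_mult htne hab,
      ArithmeticFunction.isMultiplicative_moebius.map_mul_of_coprime hab]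
    push_cast
    field_simp
  -- bound on CRsumD
  set σ : ℝ := ∑ d ∈ n.divisors, (d : ℝ) ^ s with hσ_def
  have hσ1 : (1 : ℝ) ≤ σ := by
    have h1 : (1 : ℕ) ∈ n.divisors := Nat.one_mem_divisors.mpr hn.ne'
    calc (1:ℝ) = ((1:ℕ):ℝ)^s := by simp
      _ ≤ ∑ d ∈ n.divisors, (d : ℝ) ^ s := by
          exact Finset.single_le_sum (f := fun d : ℕ => (d:ℝ)^s)
            (fun d hd => pow_nonneg (Nat.cast_nonneg d) s) h1
  have hCR_le : ∀ q : ℕ, |(CRsumD s q (n ^ s) : ℝ)| ≤ σ := by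
    intro q
    have : |(CRsumD s q (n ^ s) : ℝ)| ≤
        ∑ d ∈ q.divisors.filter (fun d => d ^ s ∣ n ^ s), (d : ℝ) ^ s := by
      rw [CRsumD]
      push_cast
      refine (Finset.abs_sum_le_sum_abs _ _).trans ?_
      refine Finset.sum_le_sum fun d hd => ?_
      rw [abs_mul, abs_pow, Nat.abs_cast]
      have hμ : |(ArithmeticFunction.moebius (q / d) : ℝ)| ≤ 1 := abs_moebius_le_one' _
      calc |(ArithmeticFunction.moebius (q / d) : ℝ)| * (d:ℝ)^s ≤ 1 * (d:ℝ)^s := by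
            apply mul_le_mul_of_nonneg_right hμ (by positivity)
        _ = (d:ℝ)^s := one_mul _
    refine this.trans ?_
    rw [hσ_def]
    apply Finset.sum_le_sum_of_subset_of_nonneg
    · intro d hd
      simp only [Finset.mem_filter, Nat.mem_divisors] at hd
      exact Nat.mem_divisors.mpr ⟨(Nat.pow_dvd_pow_iff hs.ne').mp hd.2, hn.ne'⟩
    · intro d _ _; positivity
  -- norm bound for F
  have hσpos : 0 < σ := lt_of_lt_of_le one_pos hσ1
  have hFle : ∀ q : ℕ, ‖F q‖ ≤ (2 * σ) * (q : ℝ) ^ (-t) := by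
    intro q
    rcases eq_or_ne q 0 with rfl | hq
    · simp [hF0, Real.zero_rpow (neg_ne_zero.mpr htne)]
    have hq1 : 1 ≤ q := Nat.pos_of_ne_zero hq
    have hJpos : 0 < jordanR t q := jordanR_pos ht0 (Nat.pos_of_ne_zero hq)
    have hqt : (0:ℝ) < (q:ℝ) ^ t := Real.rpow_pos_of_pos (by exact_mod_cast hq1) t
    have hJlow := jordanR_lower ht2 hq1
    have hμ : |(ArithmeticFunction.moebius q : ℝ)| ≤ 1 := abs_moebius_le_one' _
    have : ‖F q‖ = |(ArithmeticFunction.moebius q : ℝ)| * |(CRsumD s q (n ^ s) : ℝ)| /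
        jordanR t q := by
      rw [hF_def]
      rw [Real.norm_eq_abs, abs_div, abs_mul, abs_of_pos hJpos]
    rw [this]
    have hnum : |(ArithmeticFunction.moebius q : ℝ)| * |(CRsumD s q (n ^ s) : ℝ)| ≤ σ := by
      calc _ ≤ 1 * σ := mul_le_mul hμ (hCR_le q) (abs_nonneg _) one_pos.le
        _ = σ := one_mul _
    calc |(ArithmeticFunction.moebius q : ℝ)| * |(CRsumD s q (n ^ s) : ℝ)| / jordanR t q
        ≤ σ / ((1:ℝ)/2 * (q:ℝ)^t) := by
          apply div_le_div₀ hσpos.le hnum (by positivity) hJlow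
      _ = (2 * σ) * ((q:ℝ)^t)⁻¹ := by field_simp
      _ = (2 * σ) * (q : ℝ) ^ (-t) := by rw [Real.rpow_neg (by positivity)]
  have hg_sum : Summable (fun q : ℕ => (q : ℝ) ^ (-t)) :=
    Real.summable_nat_rpow.mpr (by linarith)
  have hFnorm_sum : Summable (fun q => ‖F q‖) := by
    refine Summable.of_nonneg_of_le (fun q => norm_nonneg _) hFle ?_
    exact hg_sum.mul_left _
  have hFsum : Summable F := hFnorm_sum.of_norm
  -- Euler product for F
  have hEPF : HasProd (fun p : Nat.Primes => ∑' e : ℕ, F ((p : ℕ) ^ e)) (∑' m, F m) :=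
    EulerProduct.eulerProduct_hasProd hF1 hFmul hFnorm_sum hF0
  have hinner : ∀ p : Nat.Primes, (∑' e : ℕ, F ((p : ℕ) ^ e)) = 1 + F (p : ℕ) := by
    intro p
    have hp := p.prop
    have hzero : ∀ e : ℕ, e ∉ ({0, 1} : Finset ℕ) → F ((p : ℕ) ^ e) = 0 := by
      intro e he
      have he2 : 2 ≤ e := by simp at he; omega
      have hnsq : ¬ Squarefree ((p : ℕ) ^ e) := by
        intro hsq
        have hdvd : ((p : ℕ)) * (p : ℕ) ∣ (p : ℕ) ^ e := by
          calc (p:ℕ)*(p:ℕ) = (p:ℕ)^2 := (sq _).symm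
            _ ∣ (p:ℕ)^e := pow_dvd_pow _ he2
        have := Nat.isUnit_iff.mp (hsq _ hdvd)
        exact hp.one_lt.ne' this
      simp [hF_def, ArithmeticFunction.moebius_eq_zero_of_not_squarefree hnsq]
    rw [tsum_eq_sum hzero, Finset.sum_pair (by norm_num : (0:ℕ) ≠ 1)]
    simp [hF1]
  -- Euler product for the zeta factor
  set g : ℕ → ℝ := fun q => (q : ℝ) ^ (-t) with hg_def
  have hg0 : g 0 = 0 := by simp [hg_def, Real.zero_rpow (neg_ne_zero.mpr htne)]
  have hg1 : g 1 = 1 := by simp [hg_def]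
  have hgmul : ∀ {a b : ℕ}, Nat.Coprime a b → g (a * b) = g a * g b := by
    intro a b _
    simp [hg_def, Nat.cast_mul, Real.mul_rpow (Nat.cast_nonneg a) (Nat.cast_nonneg b)]
  have hgnorm : Summable (fun q => ‖g q‖) := by
    refine hg_sum.congr fun q => ?_
    exact (Real.norm_of_nonneg (Real.rpow_nonneg (Nat.cast_nonneg q) _)).symm
  have hEPg : HasProd (fun p : Nat.Primes => ∑' e : ℕ, g ((p : ℕ) ^ e)) (∑' q, g q) :=
    EulerProduct.eulerProduct_hasProd hg1 hgmul hgnorm hg0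
  have hinnerg : ∀ p : Nat.Primes,
      (∑' e : ℕ, g ((p : ℕ) ^ e)) = (1 - ((p : ℕ) : ℝ) ^ (-t))⁻¹ := by
    intro p
    have hp1 : (1 : ℝ) < ((p : ℕ) : ℝ) := by exact_mod_cast p.prop.one_lt
    have hp0 : (0 : ℝ) ≤ ((p : ℕ) : ℝ) := by linarith
    have hterm : ∀ e : ℕ, g ((p : ℕ) ^ e) = (((p : ℕ) : ℝ) ^ (-t)) ^ e := by
      intro e
      simp only [hg_def]
      rw [Nat.cast_pow, ← Real.rpow_natCast ((p : ℕ) : ℝ) e, ← Real.rpow_mul hp0,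
        ← Real.rpow_natCast (((p : ℕ) : ℝ) ^ (-t)) e, ← Real.rpow_mul hp0]
      congr 1
      ring
    have hlt : ((p : ℕ) : ℝ) ^ (-t) < 1 :=
      Real.rpow_lt_one_of_one_lt_of_neg hp1 (by linarith)
    rw [tsum_congr hterm, tsum_geometric_of_lt_one (Real.rpow_nonneg hp0 _) hlt]
  have hZ : (∑' q, g q) = zetaR t := by
    rw [hg_sum.tsum_eq_zero_add, hg0, zero_add, zetaR]
    refine tsum_congr fun m => ?_
    simp only [hg_def]
    rw [Real.rpow_neg (by positivity), one_div]
    push_cast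
    ring_nf
  have hZpos : 0 < zetaR t := by
    rw [← hZ]
    refine Summable.tsum_pos hg_sum (fun q => Real.rpow_nonneg (Nat.cast_nonneg q) _) 1 ?_
    simp [hg_def]
  -- key computation at primes
  have hkey : ∀ p : Nat.Primes,
      (1 + F (p : ℕ)) * (1 - ((p : ℕ) : ℝ) ^ (-t)) =
        if (p : ℕ) ∣ n then 1 - ((p : ℕ) : ℝ) ^ (-(k : ℝ)) else 1 := by
    intro p
    have hp := p.prop
    have hp1 : (1 : ℝ) < ((p : ℕ) : ℝ) := by exact_mod_cast hp.one_lt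
    have hp0 : (0 : ℝ) < ((p : ℕ) : ℝ) := by linarith
    set x : ℝ := ((p : ℕ) : ℝ) ^ (-t) with hx_def
    set A : ℝ := ((p : ℕ) : ℝ) ^ t with hA_def
    have hApos : 0 < A := Real.rpow_pos_of_pos hp0 t
    have hAne : A ≠ 0 := hApos.ne'
    have hxA : x = A⁻¹ := by rw [hx_def, hA_def, Real.rpow_neg hp0.le]
    have hxlt : x < 1 := Real.rpow_lt_one_of_one_lt_of_neg hp1 (by linarith)
    have h1x : (0:ℝ) < 1 - x := by linarith
    have h1xne : (1:ℝ) - x ≠ 0 := h1x.ne'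
    have hJ : jordanR t (p : ℕ) = A * (1 - x) := jordanR_prime hp
    have hc := CRsumD_prime s (n ^ s) hp
    have hdvd_iff : (p : ℕ) ^ s ∣ n ^ s ↔ (p : ℕ) ∣ n := Nat.pow_dvd_pow_iff hs.ne'
    have hμp : (ArithmeticFunction.moebius (p : ℕ) : ℝ) = -1 := by
      rw [ArithmeticFunction.moebius_apply_prime hp]; norm_num
    by_cases hpn : (p : ℕ) ∣ n
    · have hcr : ((CRsumD s (p : ℕ) (n ^ s) : ℤ) : ℝ) = ((p : ℕ) : ℝ) ^ s - 1 := by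
        rw [hc, if_pos (hdvd_iff.mpr hpn)]; push_cast; ring
      have hrel : ((p : ℕ) : ℝ) ^ s * x = ((p : ℕ) : ℝ) ^ (-(k : ℝ)) := by
        rw [hx_def, ← Real.rpow_natCast ((p : ℕ) : ℝ) s, ← Real.rpow_add hp0]
        congr 1
        simp only [ht_def]; ring
      have hxA' : A⁻¹ < 1 := hxA ▸ hxlt
      have hA1 : (1:ℝ) < A := by nlinarith [mul_inv_cancel₀ hAne]
      have hA1ne : A - 1 ≠ 0 := sub_ne_zero.mpr hA1.ne'
      rw [if_pos hpn, ← hrel]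
      simp only [hF_def]
      rw [hcr, hμp, hJ, hxA]
      field_simp [hA1ne]
      ring
    · have hcr : ((CRsumD s (p : ℕ) (n ^ s) : ℤ) : ℝ) = -1 := by
        rw [hc, if_neg (fun h => hpn (hdvd_iff.mp h))]; push_cast; ring
      have hxA' : A⁻¹ < 1 := hxA ▸ hxlt
      have hA1 : (1:ℝ) < A := by nlinarith [mul_inv_cancel₀ hAne]
      have hA1ne : A - 1 ≠ 0 := sub_ne_zero.mpr hA1.ne'
      rw [if_neg hpn]
      simp only [hF_def]
      rw [hcr, hμp, hJ, hxA]
      field_simp [hA1ne]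
      ring
  -- the finite set of primes dividing n, as a Finset of Nat.Primes
  set S : Finset Nat.Primes := n.primeFactors.attach.map
    ⟨fun p => (⟨p.1, Nat.prime_of_mem_primeFactors p.2⟩ : Nat.Primes),
     fun a b h => by
       apply Subtype.ext
       have := congrArg Subtype.val h
       simpa using this⟩ with hS_def
  have hmemS : ∀ p : Nat.Primes, p ∈ S ↔ (p : ℕ) ∈ n.primeFactors := by
    intro p
    simp only [hS_def, Finset.mem_map, Finset.mem_attach, true_and,
      Function.Embedding.coeFn_mk]
    constructor
    · rintro ⟨a, ha⟩
      have : (a.1 : ℕ) = (p : ℕ) := congrArg Subtype.val ha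
      rw [← this]; exact a.2
    · intro hpn
      exact ⟨⟨(p : ℕ), hpn⟩, Subtype.ext rfl⟩
  set P : ℝ := ∏ p ∈ n.primeFactors, (1 - (p : ℝ) ^ (-(k : ℝ))) with hP_def
  have h1 : HasProd (fun p : Nat.Primes => (1 + F (p : ℕ)) * (1 - ((p : ℕ) : ℝ) ^ (-t))) P := by
    have h1' : HasProd (fun p : Nat.Primes => (1 + F (p : ℕ)) * (1 - ((p : ℕ) : ℝ) ^ (-t)))
        (∏ p ∈ S, ((1 + F (p : ℕ)) * (1 - ((p : ℕ) : ℝ) ^ (-t)))) := by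
      apply hasProd_prod_of_ne_finset_one
      intro p hp
      rw [hkey p, if_neg]
      intro hdvd
      exact hp ((hmemS p).mpr (Nat.mem_primeFactors.mpr ⟨p.prop, hdvd, hn.ne'⟩))
    have heq : (∏ p ∈ S, ((1 + F (p : ℕ)) * (1 - ((p : ℕ) : ℝ) ^ (-t)))) = P := by
      rw [Finset.prod_congr rfl (fun p hp => by
        rw [hkey p, if_pos (Nat.dvd_of_mem_primeFactors ((hmemS p).mp hp))])]
      rw [hS_def, Finset.prod_map, hP_def]
      exact Finset.prod_attach _ (fun p : ℕ => 1 - (p : ℝ) ^ (-(k : ℝ)))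
    rwa [heq] at h1'
  have h2 : HasProd (fun p : Nat.Primes => (1 - ((p : ℕ) : ℝ) ^ (-t))⁻¹) (zetaR t) := by
    rw [← hZ]
    simpa only [hinnerg] using hEPg
  have h3 : HasProd (fun p : Nat.Primes => 1 + F (p : ℕ)) (P * zetaR t) := by
    have h4 := h1.mul h2
    have hfun : ∀ p : Nat.Primes,
        ((1 + F (p : ℕ)) * (1 - ((p : ℕ) : ℝ) ^ (-t))) * (1 - ((p : ℕ) : ℝ) ^ (-t))⁻¹
          = 1 + F (p : ℕ) := by
      intro p
      have hp1 : (1 : ℝ) < ((p : ℕ) : ℝ) := by exact_mod_cast p.prop.one_lt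
      have hxlt : ((p : ℕ) : ℝ) ^ (-t) < 1 :=
        Real.rpow_lt_one_of_one_lt_of_neg hp1 (by linarith)
      exact mul_inv_cancel_right₀ (by linarith) _
    simpa only [hfun] using h4
  have hT : (∑' m, F m) = P * zetaR t := by
    have h4 : HasProd (fun p : Nat.Primes => 1 + F (p : ℕ)) (∑' m, F m) := by
      simpa only [hinner] using hEPF
    exact h4.unique h3
  -- assemble
  have hhs : HasSum F (P * zetaR t) := hT ▸ hFsum.hasSum
  have hshift : HasSum (fun q => F (q + 1)) (P * zetaR t) := by
    have := (hasSum_nat_add_iff' (f := F) 1).mpr hhs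
    simpa [hF0] using this
  have hdiv : HasSum (fun q => F (q + 1) / zetaR t) P := by
    have := hshift.div_const (zetaR t)
    rwa [mul_div_assoc, div_self hZpos.ne', mul_one] at this
  have hfinal_fun : ∀ q : ℕ,
      (ArithmeticFunction.moebius (q + 1) : ℝ) / (zetaR t * jordanR t (q + 1)) *
          ((CRsumD s (q + 1) (n ^ s) : ℤ) : ℝ) = F (q + 1) / zetaR t := by
    intro q
    simp only [hF_def]
    rw [div_mul_eq_mul_div, div_div, mul_comm (zetaR t) _]
  have hPval : jordanR (k : ℝ) n / (n : ℝ) ^ k = P := by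
    rw [jordanR, ← hP_def, Real.rpow_natCast]
    rw [mul_comm, mul_div_assoc, div_self (by positivity : ((n:ℝ))^k ≠ 0), mul_one]
  constructor
  · have h5 : Summable (fun q => ‖F (q + 1)‖) :=
      hFnorm_sum.comp_injective (fun a b h => by omega)
    have h6 : Summable (fun q => ‖F (q + 1)‖ * |(zetaR t)⁻¹|) := h5.mul_right _
    refine h6.congr fun q => ?_
    rw [hfinal_fun q, abs_div, Real.norm_eq_abs, abs_inv, div_eq_mul_inv]
  · simp only [hfinal_fun]
    rwa [hPval]
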